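/- Let N ≥ 3 be an odd natural number. For s in ZMod N define the cyclic interval I_s = { y ∈ ZMod N : (y − s).val ≤ (N−1)/2 }, consisting of the (N+1)/2 consecutive residues s, s+1, …, s+(N−1)/2. Then for all s, s' in ZMod N, the number of y in ZMod N for which exactly one of y ∈ I_s and y ∈ I_{s'} holds is at most 2 · min( (s'−s).val , (s−s').val ). -/

import Mathlib

private lemma val_sub'' {N : ℕ} [NeZero N] (u v : ZMod N) :
    (u - v).val = (u.val + (N - v.val)) % N := by
  rcases eq_or_ne v 0 with rfl | hv
  · simp [Nat.mod_eq_of_lt (ZMod.val_lt u), Nat.add_mod_right]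
  · rw [sub_eq_add_neg, ZMod.val_add, ZMod.neg_val, if_neg hv]

private lemma card_val_lt_le {N : ℕ} [NeZero N] (c : ℕ) :
    (Finset.univ.filter (fun z : ZMod N => z.val < c)).card ≤ c := by
  calc (Finset.univ.filter (fun z : ZMod N => z.val < c)).card
      ≤ (Finset.range c).card := by
        apply Finset.card_le_card_of_injOn ZMod.val
        · intro z hz
          simp only [Finset.mem_coe, Finset.mem_filter] at hz
          simpa using hz.2
        · intro a _ b _ h
          exact ZMod.val_injective N h
    _ = c := Finset.card_range c

private lemma key_lemma {N m : ℕ} [NeZero N] (hN : N = 2 * m + 1)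
    (s s' y : ZMod N) (hP : (y - s).val ≤ m) (hQ : ¬ (y - s').val ≤ m) :
    (y - s - (((s' - s).val - m : ℕ) : ZMod N)).val
      < min (s' - s).val (N - (s' - s).val) := by
  set a := (y - s).val with ha
  set k := (s' - s).val with hk
  have hkN : k < N := ZMod.val_lt _
  have haN : a < N := ZMod.val_lt _
  have hk0 : k ≠ 0 := by
    intro h
    have : s' - s = 0 := by
      have := (ZMod.val_eq_zero (s' - s)).mp h
      exact this
    have hss : s' = s := by linear_combination this
    apply hQ
    rw [hss]
    exact hP
  have hb : (y - s').val = (a + (N - k)) % N := by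
    have h1 : y - s' = (y - s) - (s' - s) := by ring
    rw [h1, val_sub'']
  have hak : a < k := by
    by_contra hge
    push_neg at hge
    have h2 : a + (N - k) = N + (a - k) := by omega
    have h3 : (a + (N - k)) % N = a - k := by
      rw [h2, Nat.add_mod_left, Nat.mod_eq_of_lt (by omega)]
    apply hQ
    rw [hb, h3]
    omega
  have hbval : (y - s').val = a + N - k := by
    rw [hb, Nat.mod_eq_of_lt (by omega)]
    omega
  have hQ' : m < a + N - k := by rw [← hbval]; omega
  have hcast : (((k - m : ℕ) : ZMod N)).val = k - m := by
    rw [ZMod.val_natCast, Nat.mod_eq_of_lt (by omega)]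
  rw [val_sub'', hcast, ← ha]
  rcases le_or_gt k m with hkm | hkm
  · have : k - m = 0 := by omega
    rw [this]
    have : (a + (N - 0)) % N = a := by
      rw [Nat.sub_zero, Nat.add_mod_right, Nat.mod_eq_of_lt haN]
    rw [this]
    omega
  · -- k > m; from hQ', a ≥ k - m
    have hge : k - m ≤ a := by omega
    have h2 : a + (N - (k - m)) = N + (a - (k - m)) := by omega
    rw [h2, Nat.add_mod_left, Nat.mod_eq_of_lt (by omega)]
    omega

theorem stmt_10 (N : ℕ) (hN : 3 ≤ N) (hodd : Odd N) (s s' : ZMod N) :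
    Nat.card {y : ZMod N |
        Xor' ((y - s).val ≤ (N - 1) / 2) ((y - s').val ≤ (N - 1) / 2)}
      ≤ 2 * min (s' - s).val (s - s').val := by
  classical
  haveI : NeZero N := ⟨by omega⟩
  obtain ⟨m, hm⟩ := hodd
  have hNm : (N - 1) / 2 = m := by omega
  simp only [hNm]
  rw [Nat.card_coe_set_eq, Set.ncard_eq_toFinset_card', Set.toFinset_setOf]
  by_cases hss : s = s'
  · subst hss
    simp [Xor', Xor]
  · set k := (s' - s).val with hk
    set k' := (s - s').val with hk'
    have hk0 : k ≠ 0 := by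
      intro h
      exact hss (by have := (ZMod.val_eq_zero (s' - s)).mp h; linear_combination - this)
    have hk'0 : k' ≠ 0 := by
      intro h
      exact hss (by have := (ZMod.val_eq_zero (s - s')).mp h; linear_combination this)
    have hkN : k < N := ZMod.val_lt _
    have hkk' : k' = N - k := by
      have h1 : s - s' = -(s' - s) := by ring
      rw [hk', h1, ZMod.neg_val, if_neg (by
        intro h; exact hk0 (by rw [hk, h, ZMod.val_zero]))]
    set c := min k k' with hc
    have hsub : Finset.univ.filter
        (fun y : ZMod N => Xor' ((y - s).val ≤ m) ((y - s').val ≤ m)) ⊆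
        (Finset.univ.filter
          (fun y : ZMod N => ((y - s).val ≤ m) ∧ ¬ ((y - s').val ≤ m))) ∪
        (Finset.univ.filter
          (fun y : ZMod N => ((y - s').val ≤ m) ∧ ¬ ((y - s).val ≤ m))) := by
      intro y hy
      simp only [Finset.mem_filter, Finset.mem_union, Finset.mem_univ, true_and] at *
      rcases hy with ⟨h1, h2⟩ | ⟨h1, h2⟩
      · exact Or.inl ⟨h1, h2⟩
      · exact Or.inr ⟨h1, h2⟩
    have hbound1 : (Finset.univ.filter
        (fun y : ZMod N => ((y - s).val ≤ m) ∧ ¬ ((y - s').val ≤ m))).card ≤ c := by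
      calc _ ≤ (Finset.univ.filter (fun z : ZMod N => z.val < c)).card := by
              apply Finset.card_le_card_of_injOn
                (fun y => y - s - (((s' - s).val - m : ℕ) : ZMod N))
              · intro y hy
                simp only [Finset.mem_coe, Finset.mem_filter, Finset.mem_univ, true_and] at *
                have h := key_lemma hm s s' y hy.1 hy.2
                show _ < min k k'
                omega
              · intro x _ z _ h
                simpa using h
        _ ≤ c := card_val_lt_le c
    have hbound2 : (Finset.univ.filter
        (fun y : ZMod N => ((y - s').val ≤ m) ∧ ¬ ((y - s).val ≤ m))).card ≤ c := by
      calc _ ≤ (Finset.univ.filter (fun z : ZMod N => z.val < c)).card := by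
              apply Finset.card_le_card_of_injOn
                (fun y => y - s' - (((s - s').val - m : ℕ) : ZMod N))
              · intro y hy
                simp only [Finset.mem_coe, Finset.mem_filter, Finset.mem_univ, true_and] at *
                have h := key_lemma hm s' s y hy.1 hy.2
                show _ < min k k'
                omega
              · intro x _ z _ h
                simpa using h
        _ ≤ c := card_val_lt_le c
    calc (Finset.univ.filter
          (fun y : ZMod N => Xor' ((y - s).val ≤ m) ((y - s').val ≤ m))).card
        ≤ _ := Finset.card_le_card hsub
      _ ≤ _ := Finset.card_union_le _ _
      _ ≤ c + c := Nat.add_le_add hbound1 hbound2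
      _ = 2 * c := by omega
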